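/- In the one-dimensional FCT update q_i^{n+1} = q_i^{td} - (Δt/h)(η_{i+1/2} A_{i+1/2} - η_{i-1/2} A_{i-1/2}), if for every cell i the limiter coefficients satisfy 0 ≤ η ≤ 1 and the Zalesak choice η_{i+1/2} = min(R^+_{i+1}, R^-_i) when A_{i+1/2} > 0 and min(R^+_i, R^-_{i+1}) otherwise, with R^±_i = min(1, Q^±_i / P^±_i) when P^±_i > 0 and 0 otherwise, where P^+_i = max(A_{i-1/2},0) - min(A_{i+1/2},0), P^-_i = max(A_{i+1/2},0) - min(A_{i-1/2},0), Q^+_i = (q_max,i - q^{td}_i)(h/Δt), Q^-_i = (q^{td}_i - q_min,i)(h/Δt), and q_min,i ≤ q^{td}_i ≤ q_max,i, then q_min,i ≤ q_i^{n+1} ≤ q_max,i for every i. -/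

import Mathlib

/-- The Zalesak FCT limiter guarantees that the corrected solution stays within
the prescribed local bounds. Here `A i` denotes the antidiffusive flux
A_{i+1/2} on the face between cells `i` and `i+1`. -/
theorem zalesak_limiter_bounds
    (h Δt : ℝ) (hh : 0 < h) (hΔt : 0 < Δt)
    (td A qmax qmin : ℤ → ℝ)
    (hbound : ∀ i, qmin i ≤ td i ∧ td i ≤ qmax i)
    (Pp Pm Qp Qm Rp Rm η qnew : ℤ → ℝ)
    (hPp : ∀ i, Pp i = max (A (i-1)) 0 - min (A i) 0)
    (hPm : ∀ i, Pm i = max (A i) 0 - min (A (i-1)) 0)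
    (hQp : ∀ i, Qp i = (qmax i - td i) * (h / Δt))
    (hQm : ∀ i, Qm i = (td i - qmin i) * (h / Δt))
    (hRp : ∀ i, Rp i = if 0 < Pp i then min 1 (Qp i / Pp i) else 0)
    (hRm : ∀ i, Rm i = if 0 < Pm i then min 1 (Qm i / Pm i) else 0)
    (hη01 : ∀ i, 0 ≤ η i ∧ η i ≤ 1)
    (hη : ∀ i, η i = if 0 < A i then min (Rp (i+1)) (Rm i)
                     else min (Rp i) (Rm (i+1)))
    (hq : ∀ i, qnew i = td i - (Δt / h) * (η i * A i - η (i-1) * A (i-1))) :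
    ∀ i, qmin i ≤ qnew i ∧ qnew i ≤ qmax i := by
  have hhd : 0 ≤ h / Δt := (div_pos hh hΔt).le
  have hdh : 0 ≤ Δt / h := (div_pos hΔt hh).le
  have hQp0 : ∀ i, 0 ≤ Qp i := fun i => by
    rw [hQp i]; exact mul_nonneg (sub_nonneg.2 (hbound i).2) hhd
  have hQm0 : ∀ i, 0 ≤ Qm i := fun i => by
    rw [hQm i]; exact mul_nonneg (sub_nonneg.2 (hbound i).1) hhd
  have hRp0 : ∀ i, 0 ≤ Rp i := fun i => by
    rw [hRp i]; split_ifs with hp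
    · exact le_min zero_le_one (div_nonneg (hQp0 i) hp.le)
    · exact le_refl 0
  have hRm0 : ∀ i, 0 ≤ Rm i := fun i => by
    rw [hRm i]; split_ifs with hp
    · exact le_min zero_le_one (div_nonneg (hQm0 i) hp.le)
    · exact le_refl 0
  have hRpPp : ∀ i, Rp i * Pp i ≤ Qp i := fun i => by
    rw [hRp i]; split_ifs with hp
    · calc min 1 (Qp i / Pp i) * Pp i
          ≤ (Qp i / Pp i) * Pp i :=
            mul_le_mul_of_nonneg_right (min_le_right _ _) hp.le
        _ = Qp i := div_mul_cancel₀ _ (ne_of_gt hp)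
    · simpa using hQp0 i
  have hRmPm : ∀ i, Rm i * Pm i ≤ Qm i := fun i => by
    rw [hRm i]; split_ifs with hp
    · calc min 1 (Qm i / Pm i) * Pm i
          ≤ (Qm i / Pm i) * Pm i :=
            mul_le_mul_of_nonneg_right (min_le_right _ _) hp.le
        _ = Qm i := div_mul_cancel₀ _ (ne_of_gt hp)
    · simpa using hQm0 i
  intro i
  have hsub : i - 1 + 1 = i := by ring
  -- upper bound: incoming net flux ≤ Rp i * Pp i
  have h1 : η (i-1) * A (i-1) ≤ Rp i * max (A (i-1)) 0 := by
    rcases lt_or_ge 0 (A (i-1)) with hA | hA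
    · have hηle : η (i-1) ≤ Rp i := by
        rw [hη (i-1), if_pos hA, hsub]; exact min_le_left _ _
      rw [max_eq_left hA.le]
      exact mul_le_mul_of_nonneg_right hηle hA.le
    · rw [max_eq_right hA]
      simpa using mul_nonpos_of_nonneg_of_nonpos (hη01 (i-1)).1 hA
  have h2 : -(η i * A i) ≤ Rp i * (-(min (A i) 0)) := by
    rcases lt_or_ge 0 (A i) with hA | hA
    · rw [min_eq_right hA.le]
      simp only [neg_zero, mul_zero, neg_nonpos]
      exact mul_nonneg (hη01 i).1 hA.le
    · have hηle : η i ≤ Rp i := by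
        rw [hη i, if_neg (not_lt.2 hA)]; exact min_le_left _ _
      rw [min_eq_left hA]
      calc -(η i * A i) = η i * (-A i) := by ring
        _ ≤ Rp i * (-A i) := mul_le_mul_of_nonneg_right hηle (by linarith)
        _ = Rp i * (-A i) := rfl
  have keyp : η (i-1) * A (i-1) - η i * A i ≤ Qp i := by
    have := hRpPp i
    rw [hPp i] at this
    nlinarith [h1, h2]
  -- lower bound: outgoing net flux ≤ Rm i * Pm i
  have h3 : η i * A i ≤ Rm i * max (A i) 0 := by
    rcases lt_or_ge 0 (A i) with hA | hA
    · have hηle : η i ≤ Rm i := by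
        rw [hη i, if_pos hA]; exact min_le_right _ _
      rw [max_eq_left hA.le]
      exact mul_le_mul_of_nonneg_right hηle hA.le
    · rw [max_eq_right hA]
      simpa using mul_nonpos_of_nonneg_of_nonpos (hη01 i).1 hA
  have h4 : -(η (i-1) * A (i-1)) ≤ Rm i * (-(min (A (i-1)) 0)) := by
    rcases lt_or_ge 0 (A (i-1)) with hA | hA
    · rw [min_eq_right hA.le]
      simp only [neg_zero, mul_zero, neg_nonpos]
      exact mul_nonneg (hη01 (i-1)).1 hA.le
    · have hηle : η (i-1) ≤ Rm i := by
        rw [hη (i-1), if_neg (not_lt.2 hA), hsub]; exact min_le_right _ _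
      rw [min_eq_left hA]
      calc -(η (i-1) * A (i-1)) = η (i-1) * (-A (i-1)) := by ring
        _ ≤ Rm i * (-A (i-1)) := mul_le_mul_of_nonneg_right hηle (by linarith)
  have keym : η i * A i - η (i-1) * A (i-1) ≤ Qm i := by
    have := hRmPm i
    rw [hPm i] at this
    nlinarith [h3, h4]
  -- conclude
  have hQpconv : Δt / h * Qp i = qmax i - td i := by
    rw [hQp i]; field_simp
  have hQmconv : Δt / h * Qm i = td i - qmin i := by
    rw [hQm i]; field_simp
  have hup := mul_le_mul_of_nonneg_left keyp hdh
  have hlo := mul_le_mul_of_nonneg_left keym hdh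
  rw [hQpconv] at hup
  rw [hQmconv] at hlo
  rw [hq i]
  constructor <;> nlinarith [hup, hlo]
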